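/- Let X be a random variable with H(X) = ∞, let g be measurable, Y = g(X), and suppose the relative information loss satisfies l(X→Y) > 0. Then the absolute information loss is infinite: L(X→Y) = H(X|Y) = ∞. -/

import Mathlib

open MeasureTheory ProbabilityTheory Filter Set
open scoped ENNReal NNReal Topology

noncomputable section

/-- Base-2 entropy of the discrete (atomic) part of a measure. -/
def pmfEntropy {β : Type*} [MeasurableSpace β] (ν : Measure β) : ℝ≥0∞ :=
  ∑' b : β, ENNReal.ofReal (-((ν {b}).toReal * Real.logb 2 (ν {b}).toReal))

/-- Conditional entropy `H(X | Y)` (of a discretely supported `X`) given `Y`,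
computed through the regular conditional distribution of `X` given `Y`. -/
def condEnt {α β γ : Type*} [MeasurableSpace α] [MeasurableSpace β] [StandardBorelSpace β]
    [Nonempty β] [MeasurableSpace γ] (μ : Measure α) [IsFiniteMeasure μ]
    (X : α → β) (Y : α → γ) : ℝ≥0∞ :=
  ∫⁻ y, pmfEntropy (condDistrib X Y μ y) ∂(μ.map Y)

/-- Componentwise uniform quantization `X̂ₙ = ⌊2ⁿ X⌋ / 2ⁿ`. -/
def quant {ι : Type*} (n : ℕ) (x : ι → ℝ) : ι → ℝ :=
  fun i => (⌊(2 : ℝ) ^ n * x i⌋ : ℝ) / (2 : ℝ) ^ n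

/-- `H(X̂ₙ)`, entropy of the quantized input. -/
def entQ {α ι : Type*} [MeasurableSpace α] [Fintype ι] (μ : Measure α)
    (X : α → ι → ℝ) (n : ℕ) : ℝ≥0∞ :=
  pmfEntropy (μ.map fun a => quant n (X a))

/-- `H(X̂ₙ | Y)`. -/
def condEntQ {α ι γ : Type*} [MeasurableSpace α] [Fintype ι] [MeasurableSpace γ]
    (μ : Measure α) [IsFiniteMeasure μ] (X : α → ι → ℝ) (Y : α → γ) (n : ℕ) : ℝ≥0∞ :=
  condEnt μ (fun a => quant n (X a)) Y

/-- Information loss `L(X→Y) = H(X|Y) = limₙ H(X̂ₙ|Y)`; since the sequence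
`H(X̂ₙ|Y)` is nondecreasing in `n` the limit equals the supremum. -/
def infoLoss {α ι γ : Type*} [MeasurableSpace α] [Fintype ι] [MeasurableSpace γ]
    (μ : Measure α) [IsFiniteMeasure μ] (X : α → ι → ℝ) (Y : α → γ) : ℝ≥0∞ :=
  ⨆ n : ℕ, condEntQ μ X Y n

/-- The sequence `H(X̂ₙ|Y)/H(X̂ₙ)` whose limit is the relative information loss. -/
def relLossSeq {α ι γ : Type*} [MeasurableSpace α] [Fintype ι] [MeasurableSpace γ]
    (μ : Measure α) [IsFiniteMeasure μ] (X : α → ι → ℝ) (Y : α → γ) (n : ℕ) : ℝ :=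
  (condEntQ μ X Y n).toReal / (entQ μ X n).toReal

/-- The sequence `I(X̂ₙ;Y)/H(X̂ₙ) = (H(X̂ₙ) - H(X̂ₙ|Y))/H(X̂ₙ)` whose limit is the
relative information transfer. -/
def relTransSeq {α ι γ : Type*} [MeasurableSpace α] [Fintype ι] [MeasurableSpace γ]
    (μ : Measure α) [IsFiniteMeasure μ] (X : α → ι → ℝ) (Y : α → γ) (n : ℕ) : ℝ :=
  ((entQ μ X n).toReal - (condEntQ μ X Y n).toReal) / (entQ μ X n).toReal

/-- `H(ν̂ₙ)` for a measure on `ℝᴺ` (quantized entropy of a distribution). -/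
def entQM {ι : Type*} [Fintype ι] (ν : Measure (ι → ℝ)) (n : ℕ) : ℝ≥0∞ :=
  pmfEntropy (ν.map (quant n))


/- ===== auxiliary lemmas ===== -/

/-- Single term of `pmfEntropy`. -/
def entTerm (t : ℝ≥0∞) : ℝ≥0∞ :=
  ENNReal.ofReal (-(t.toReal * Real.logb 2 t.toReal))

@[simp] lemma entTerm_zero : entTerm 0 = 0 := by simp [entTerm]

lemma pmfEntropy_eq_tsum_entTerm {β : Type*} [MeasurableSpace β] (ν : Measure β) :
    pmfEntropy ν = ∑' b : β, entTerm (ν {b}) := rfl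

lemma entTerm_tsum_le {Ω : Type*} (g : Ω → ℝ≥0∞) (hq : ∑' ω, g ω ≤ 1) :
    entTerm (∑' ω, g ω) ≤ ∑' ω, entTerm (g ω) := by
  set q : ℝ≥0∞ := ∑' ω, g ω with hqdef
  rcases eq_or_ne q 0 with h0 | h0
  · simp [h0]
  have hqtop : q ≠ ⊤ := ne_top_of_le_ne_top ENNReal.one_ne_top hq
  have hgtop : ∀ ω, g ω ≠ ⊤ := fun ω =>
    ne_top_of_le_ne_top hqtop (ENNReal.le_tsum ω)
  have hqR : q.toReal = ∑' ω, (g ω).toReal := ENNReal.tsum_toReal_eq hgtop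
  have hqpos : 0 < q.toReal := ENNReal.toReal_pos h0 hqtop
  have hq1 : q.toReal ≤ 1 := by
    simpa using ENNReal.toReal_mono ENNReal.one_ne_top hq
  set c : ℝ := -Real.logb 2 q.toReal with hc
  have hc0 : 0 ≤ c := by
    simp only [hc, neg_nonneg]
    exact Real.logb_nonpos one_lt_two hqpos.le hq1
  have hsum : Summable fun ω => (g ω).toReal := ENNReal.summable_toReal hqtop
  have key : entTerm q = ∑' ω, ENNReal.ofReal ((g ω).toReal * c) := by
    unfold entTerm
    have : -(q.toReal * Real.logb 2 q.toReal) = q.toReal * c := by ring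
    rw [this, hqR, ← tsum_mul_right]
    exact ENNReal.ofReal_tsum_of_nonneg
      (fun ω => mul_nonneg ENNReal.toReal_nonneg hc0) (hsum.mul_right c)
  rw [key]
  refine ENNReal.tsum_le_tsum fun ω => ?_
  rcases eq_or_ne (g ω) 0 with hg0 | hg0
  · simp [hg0]
  have hgpos : 0 < (g ω).toReal := ENNReal.toReal_pos hg0 (hgtop ω)
  have hle : (g ω).toReal ≤ q.toReal :=
    ENNReal.toReal_mono hqtop (ENNReal.le_tsum ω)
  have hlog : Real.logb 2 (g ω).toReal ≤ Real.logb 2 q.toReal :=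
    Real.logb_le_logb_of_le one_lt_two hgpos hle
  refine ENNReal.ofReal_le_ofReal ?_
  have h5 : (g ω).toReal * c ≤ (g ω).toReal * (-Real.logb 2 (g ω).toReal) :=
    mul_le_mul_of_nonneg_left (by rw [hc]; linarith) hgpos.le
  nlinarith [h5]

lemma measure_eq_tsum_atoms {β : Type*} [MeasurableSpace β] [MeasurableSingletonClass β]
    (ν : Measure β) {S : Set β} (hS : S.Countable) (hνS : ν Sᶜ = 0)
    (t : Set β) : ν t = ∑' a : t, ν {(a : β)} := by
  have h1 : ν t = ν (t ∩ S) := (measure_inter_conull hνS).symm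
  have hts : (t ∩ S).Countable := hS.mono inter_subset_right
  have h2 : ν (t ∩ S) = ∑' a : (t ∩ S : Set β), ν {(a : β)} := by
    rw [← measure_biUnion hts ?_ (fun a _ => measurableSet_singleton a)]
    · congr 1; ext x; simp
    · intro a _ b _ hab
      simp [Function.onFun, Set.disjoint_singleton, hab]
  have e1 : ∑' a : (t ∩ S : Set β), ν {(a : β)}
      = ∑' b, (t ∩ S).indicator (fun b => ν {b}) b := tsum_subtype (t ∩ S) (fun b => ν {b})
  have e2 : ∑' a : t, ν {(a : β)}
      = ∑' b, t.indicator (fun b => ν {b}) b := tsum_subtype t (fun b => ν {b})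
  rw [h1, h2, e1, e2]
  congr 1
  funext a
  by_cases haS : a ∈ S
  · by_cases hat : a ∈ t <;> simp [Set.indicator_apply, haS, hat]
  · have h0 : ν {a} = 0 := measure_mono_null (by simpa using haS) hνS
    by_cases hat : a ∈ t <;>
      simp [Set.indicator_apply, haS, hat, h0]

/-- Grouping (data-processing) inequality for the entropy of a purely atomic
probability measure. -/
lemma pmfEntropy_map_le {β : Type*} [MeasurableSpace β] [MeasurableSingletonClass β]
    (ν : Measure β) [IsProbabilityMeasure ν] {f : β → β} (hf : Measurable f)
    {S : Set β} (hS : S.Countable) (hνS : ν Sᶜ = 0) :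
    pmfEntropy (ν.map f) ≤ pmfEntropy ν := by
  calc pmfEntropy (ν.map f)
      = ∑' b, entTerm (ν (f ⁻¹' {b})) := by
        rw [pmfEntropy_eq_tsum_entTerm]
        exact tsum_congr fun b => by
          rw [Measure.map_apply hf (measurableSet_singleton b)]
    _ ≤ ∑' b, ∑' a : { a : β // f a = b }, entTerm (ν {(a : β)}) := by
        refine ENNReal.tsum_le_tsum fun b => ?_
        rw [measure_eq_tsum_atoms ν hS hνS (f ⁻¹' {b})]
        exact entTerm_tsum_le (fun a : { a : β // f a = b } => ν {(a : β)})
          (le_of_eq_of_le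
            (show (∑' a : { a : β // f a = b }, ν {(a : β)}) = ν (f ⁻¹' {b}) from
              (measure_eq_tsum_atoms ν hS hνS (f ⁻¹' {b})).symm)
            prob_le_one)
    _ = ∑' p : (Σ b : β, { a : β // f a = b }), entTerm (ν {(p.2 : β)}) :=
        (ENNReal.tsum_sigma' (fun p : (Σ b : β, { a : β // f a = b }) => entTerm (ν {(p.2 : β)}))).symm
    _ = pmfEntropy ν := by
        rw [pmfEntropy_eq_tsum_entTerm]
        exact Equiv.tsum_eq (Equiv.sigmaFiberEquiv f) (fun a => entTerm (ν {a}))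

lemma floor_half_floor (a : ℝ) : ⌊(⌊a⌋ : ℝ) / 2⌋ = ⌊a / 2⌋ := by
  have h1 : (⌊a / 2⌋ : ℝ) ≤ a / 2 := Int.floor_le _
  have h2 : a / 2 < ⌊a / 2⌋ + 1 := Int.lt_floor_add_one _
  have h3 : (2 * ⌊a / 2⌋ : ℤ) ≤ ⌊a⌋ := by
    rw [Int.le_floor]; push_cast; linarith
  have h3' : (2 * ⌊a / 2⌋ : ℝ) ≤ (⌊a⌋ : ℝ) := by exact_mod_cast h3
  have h4 : (⌊a⌋ : ℝ) ≤ a := Int.floor_le a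
  rw [Int.floor_eq_iff]
  constructor <;> push_cast <;> linarith

lemma quant_comp {ι : Type*} (n : ℕ) (x : ι → ℝ) :
    quant n (quant (n + 1) x) = quant n x := by
  funext i
  show (⌊(2:ℝ)^n * ((⌊(2:ℝ)^(n+1) * x i⌋ : ℝ) / 2^(n+1))⌋ : ℝ) / 2^n
      = (⌊(2:ℝ)^n * x i⌋ : ℝ) / 2^n
  congr 2
  have h1 : (2:ℝ)^n * ((⌊(2:ℝ)^(n+1) * x i⌋ : ℝ) / 2^(n+1))
      = (⌊(2:ℝ)^(n+1) * x i⌋ : ℝ) / 2 := by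
    rw [pow_succ]; field_simp
  rw [h1, floor_half_floor]
  congr 1
  rw [pow_succ]; ring

lemma measurable_quant {ι : Type*} (n : ℕ) : Measurable (quant (ι := ι) n) := by
  unfold quant
  refine measurable_pi_lambda _ fun i => ?_
  exact (measurable_from_top.comp
    ((measurable_const.mul (measurable_pi_apply i)).floor)).div_const _

lemma entQ_mono_step {α ι : Type*} [MeasurableSpace α] [Fintype ι]
    (μ : Measure α) [IsProbabilityMeasure μ] {X : α → ι → ℝ} (hX : Measurable X) (n : ℕ) :
    entQ μ X n ≤ entQ μ X (n + 1) := by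
  set ν : Measure (ι → ℝ) := μ.map (fun a => quant (n + 1) (X a)) with hν
  have hmeas : Measurable (fun a => quant (n + 1) (X a)) :=
    (measurable_quant (n + 1)).comp hX
  have : IsProbabilityMeasure ν := Measure.isProbabilityMeasure_map hmeas.aemeasurable
  have hmapeq : μ.map (fun a => quant n (X a)) = ν.map (quant n) := by
    rw [hν, Measure.map_map (measurable_quant n) hmeas]
    congr 1
    funext a
    exact (quant_comp n (X a)).symm
  set S : Set (ι → ℝ) :=
    {x | ∀ i, x i ∈ Set.range (fun k : ℤ => (k : ℝ) / 2 ^ (n + 1))} with hSdef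
  have hS : S.Countable := Set.countable_pi fun i => Set.countable_range _
  have hνS : ν Sᶜ = 0 := by
    rw [hν, Measure.map_apply hmeas (hS.measurableSet.compl)]
    have : (fun a => quant (n + 1) (X a)) ⁻¹' Sᶜ = ∅ := by
      rw [Set.eq_empty_iff_forall_notMem]
      intro a ha
      exact ha fun i => ⟨⌊(2:ℝ) ^ (n + 1) * X a i⌋, rfl⟩
    rw [this, measure_empty]
  show pmfEntropy (μ.map fun a => quant n (X a)) ≤ pmfEntropy ν
  rw [hmapeq]
  exact pmfEntropy_map_le ν (measurable_quant n) hS hνS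

lemma entQ_mono {α ι : Type*} [MeasurableSpace α] [Fintype ι]
    (μ : Measure α) [IsProbabilityMeasure μ] {X : α → ι → ℝ} (hX : Measurable X) :
    Monotone (entQ μ X) :=
  monotone_nat_of_le_succ (entQ_mono_step μ hX)

/-- **Positive relative loss implies infinite absolute loss.**  If `H(X) = ∞`
(in the sense that `H(X̂ₙ) → ∞`, i.e. `supₙ H(X̂ₙ) = ∞`) and the relative
information loss `l(X→Y)` exists and is positive, then `L(X→Y) = H(X|Y) = ∞`. -/
theorem infoLoss_eq_top_of_relLoss_pos
    {α ι γ : Type*} [MeasurableSpace α] [Fintype ι] [MeasurableSpace γ]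
    (μ : Measure α) [IsProbabilityMeasure μ]
    (X : α → ι → ℝ) (g : (ι → ℝ) → γ)
    (hX : Measurable X) (hg : Measurable g)
    (hHX : (⨆ n : ℕ, entQ μ X n) = ⊤)
    (l : ℝ) (hlpos : 0 < l)
    (hl : Tendsto (fun n : ℕ => relLossSeq μ X (fun a => g (X a)) n) atTop (𝓝 l)) :
    infoLoss μ X (fun a => g (X a)) = ⊤ := by
  by_contra hC
  set Y : α → γ := fun a => g (X a) with hY
  set C : ℝ≥0∞ := infoLoss μ X Y with hCdef
  have hCne : C ≠ ⊤ := hC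
  set M : ℝ := C.toReal with hM
  have hev : ∀ᶠ n in atTop, l / 2 < relLossSeq μ X Y n :=
    hl.eventually (eventually_gt_nhds (by linarith))
  obtain ⟨N, hN⟩ := eventually_atTop.mp hev
  have hB : ∀ n, N ≤ n → entQ μ X n ≤ ENNReal.ofReal (2 * M / l) := by
    intro n hn
    have h := hN n hn
    simp only [relLossSeq] at h
    set d : ℝ := (entQ μ X n).toReal with hd
    set c : ℝ := (condEntQ μ X Y n).toReal with hc
    have hdne : d ≠ 0 := by
      intro h0
      rw [h0, div_zero] at h
      linarith
    have hdpos : 0 < d := lt_of_le_of_ne ENNReal.toReal_nonneg (Ne.symm hdne)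
    have htop : entQ μ X n ≠ ⊤ := by
      intro ht
      apply hdne
      rw [hd, ht, ENNReal.toReal_top]
    have hCle : condEntQ μ X Y n ≤ C := le_iSup (fun m => condEntQ μ X Y m) n
    have hcM : c ≤ M := ENNReal.toReal_mono hCne hCle
    have h1 : l / 2 * d < c := (lt_div_iff₀ hdpos).mp h
    have h2 : d ≤ 2 * M / l := by
      rw [le_div_iff₀ hlpos]
      nlinarith
    calc entQ μ X n = ENNReal.ofReal d := (ENNReal.ofReal_toReal htop).symm
      _ ≤ ENNReal.ofReal (2 * M / l) := ENNReal.ofReal_le_ofReal h2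
  have hall : ∀ n, entQ μ X n ≤ ENNReal.ofReal (2 * M / l) := fun n =>
    le_trans (entQ_mono μ hX (le_max_left n N)) (hB (max n N) (le_max_right n N))
  have : (⊤ : ℝ≥0∞) ≤ ENNReal.ofReal (2 * M / l) := hHX ▸ iSup_le hall
  exact ENNReal.ofReal_ne_top (top_le_iff.mp this)
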